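/- Property P1 (ordering of cost differences): suppose x¹, x² are social states with exposures e(x¹) < e(x²). Then for every d ∈ 𝒟: 0 < C_{d,P}(x²) − C_{d,P}(x¹) < C_{d,I}(x²) − C_{d,I}(x¹) ≤ C_{d,N}(x²) − C_{d,N}(x¹), where C_{d,P}(x) = τ·(1 + d·e(x))·L_P + c_P, C_{d,N}(x) = τ·(1 + d·e(x))·L_U, C_{d,I}(x) = C_{d,N}(x) + c_I − min(Cov_max, ξ·max(0, C_{d,N}(x) − ded)), under the assumptions τ > 0, d ≥ 1, 0 < L_P < (1 − ξ)·L_U, ξ ∈ (0,1], Cov_max ≥ 0, ded ≥ 0. -/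
import Mathlib


open Finset

/-- Property P1: if social states have exposures `e₁ < e₂`, then for any
degree `d ≥ 1` the cost differences satisfy
`0 < C_{d,P}(x²) − C_{d,P}(x¹) < C_{d,I}(x²) − C_{d,I}(x¹) ≤ C_{d,N}(x²) − C_{d,N}(x¹)`,
where `C_{d,P} = τ(1 + d·e)L_P + c_P`, `C_{d,N} = τ(1 + d·e)L_U`, and
`C_{d,I} = C_{d,N} + c_I − min(Cov_max, ξ·max(0, C_{d,N} − ded))`. -/
theorem property_P1 (τ LP LU cP cI ξ ded Cov : ℝ)
    (hτ0 : 0 < τ) (hτ1 : τ ≤ 1)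
    (hLP : 0 < LP) (hL : LP < (1 - ξ) * LU)
    (hξ0 : 0 < ξ) (hξ1 : ξ ≤ 1) (hCov : 0 ≤ Cov) (hded : 0 ≤ ded)
    (d : ℕ) (hd : 1 ≤ d)
    (e₁ e₂ : ℝ) (he₁ : 0 ≤ e₁) (hlt : e₁ < e₂) :
    0 < (τ * (1 + d * e₂) * LP + cP) - (τ * (1 + d * e₁) * LP + cP) ∧
    (τ * (1 + d * e₂) * LP + cP) - (τ * (1 + d * e₁) * LP + cP)
      < (τ * (1 + d * e₂) * LU + cI
            - min Cov (ξ * max 0 (τ * (1 + d * e₂) * LU - ded)))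
        - (τ * (1 + d * e₁) * LU + cI
            - min Cov (ξ * max 0 (τ * (1 + d * e₁) * LU - ded))) ∧
    (τ * (1 + d * e₂) * LU + cI
          - min Cov (ξ * max 0 (τ * (1 + d * e₂) * LU - ded)))
        - (τ * (1 + d * e₁) * LU + cI
            - min Cov (ξ * max 0 (τ * (1 + d * e₁) * LU - ded)))
      ≤ (τ * (1 + d * e₂) * LU) - (τ * (1 + d * e₁) * LU) := by
  have hd1 : (1:ℝ) ≤ (d:ℝ) := by exact_mod_cast hd
  have hΔ : 0 < e₂ - e₁ := by linarith
  have hK : 0 < τ * d * (e₂ - e₁) := by positivity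
  have hξ' : 0 < 1 - ξ := by
    rcases eq_or_lt_of_le hξ1 with h | h
    · exfalso; rw [h] at hL; norm_num at hL; linarith
    · linarith
  have hLU : 0 < LU := by
    by_contra h
    push_neg at h
    nlinarith [mul_nonpos_of_nonneg_of_nonpos hξ'.le h]
  set A₁ := τ * (1 + d * e₁) * LU with hA₁
  set A₂ := τ * (1 + d * e₂) * LU with hA₂
  have hAΔ : A₂ - A₁ = τ * d * (e₂ - e₁) * LU := by rw [hA₁, hA₂]; ring
  have hAle : A₁ ≤ A₂ := by nlinarith [mul_pos hK hLU]
  set m₁ := max 0 (A₁ - ded) with hm₁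
  set m₂ := max 0 (A₂ - ded) with hm₂
  have hmΔ : m₂ - m₁ ≤ A₂ - A₁ := by
    rcases max_cases 0 (A₁ - ded) with ⟨h1, h1'⟩ | ⟨h1, h1'⟩ <;>
      rcases max_cases 0 (A₂ - ded) with ⟨h2, h2'⟩ | ⟨h2, h2'⟩ <;>
      simp only [hm₁, hm₂, h1, h2] <;> linarith
  have hmle : m₁ ≤ m₂ := max_le_max le_rfl (by linarith)
  have hξm : ξ * m₁ ≤ ξ * m₂ := mul_le_mul_of_nonneg_left hmle hξ0.le
  have hins : min Cov (ξ * m₂) - min Cov (ξ * m₁) ≤ ξ * m₂ - ξ * m₁ := by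
    rcases min_cases Cov (ξ * m₁) with ⟨h1, h1'⟩ | ⟨h1, h1'⟩ <;>
      rcases min_cases Cov (ξ * m₂) with ⟨h2, h2'⟩ | ⟨h2, h2'⟩ <;>
      rw [h1, h2] <;> linarith
  have hins2 : min Cov (ξ * m₂) - min Cov (ξ * m₁) ≤ ξ * (A₂ - A₁) := by
    nlinarith [mul_le_mul_of_nonneg_left hmΔ hξ0.le]
  have hinsge : min Cov (ξ * m₁) ≤ min Cov (ξ * m₂) := min_le_min le_rfl hξm
  clear_value A₁ A₂ m₁ m₂
  refine ⟨?_, ?_, ?_⟩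
  · nlinarith [mul_pos hK hLP]
  · have hkey : τ * d * (e₂ - e₁) * LP < (1 - ξ) * (A₂ - A₁) := by
      rw [hAΔ]
      nlinarith [mul_lt_mul_of_pos_left hL hK]
    linarith [hins2, hkey]
  · linarith [hinsge]
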